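/- Let θ(t,λ) be the Prüfer angle as above with θ(a,λ) = α ∈ [0,π). Then θ(b,λ) → ∞ as λ → +∞. -/

import Mathlib

open MeasureTheory intervalIntegral Set Real


lemma st10_sin_lip (y z : ℝ) : |Real.sin y - Real.sin z| ≤ |y - z| := by
  have h : Real.sin y - Real.sin z = ∫ t in z..y, Real.cos t := by
    rw [integral_cos]
  rw [h]
  have := intervalIntegral.norm_integral_le_of_norm_le_const
    (a := z) (b := y) (C := 1) (f := fun t => Real.cos t)
    (fun x _ => by simpa [Real.norm_eq_abs] using Real.abs_cos_le_one x)
  simpa [Real.norm_eq_abs, abs_sub_comm] using this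

lemma st10_den {μ : ℝ} (hμ : 1 ≤ μ) (y : ℝ) :
    1 ≤ Real.cos y ^ 2 + μ ^ 2 * Real.sin y ^ 2 := by
  nlinarith [Real.sin_sq_add_cos_sq y, sq_nonneg (Real.sin y),
    mul_nonneg (sub_nonneg.2 hμ) (by linarith : (0:ℝ) ≤ μ + 1)]

lemma st10_f_cont {μ : ℝ} (hμ : 1 ≤ μ) :
    Continuous (fun y => μ / (Real.cos y ^ 2 + μ ^ 2 * Real.sin y ^ 2)) := by
  apply continuous_const.div (by continuity)
  intro y
  have := st10_den hμ y
  linarith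

lemma st10_f_nonneg {μ : ℝ} (hμ : 1 ≤ μ) (y : ℝ) :
    0 ≤ μ / (Real.cos y ^ 2 + μ ^ 2 * Real.sin y ^ 2) :=
  div_nonneg (by linarith) (by linarith [st10_den hμ y])

lemma st10_f_le {μ : ℝ} (hμ : 1 ≤ μ) (y : ℝ) :
    μ / (Real.cos y ^ 2 + μ ^ 2 * Real.sin y ^ 2) ≤ μ :=
  div_le_self (by linarith) (st10_den hμ y)

lemma st10_f_lip {μ : ℝ} (hμ : 1 ≤ μ) (y z : ℝ) :
    |μ / (Real.cos y ^ 2 + μ ^ 2 * Real.sin y ^ 2)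
      - μ / (Real.cos z ^ 2 + μ ^ 2 * Real.sin z ^ 2)| ≤ 2 * μ ^ 3 * |y - z| := by
  set Dy := Real.cos y ^ 2 + μ ^ 2 * Real.sin y ^ 2 with hDy
  set Dz := Real.cos z ^ 2 + μ ^ 2 * Real.sin z ^ 2 with hDz
  have h1 : 1 ≤ Dy := st10_den hμ y
  have h2 : 1 ≤ Dz := st10_den hμ z
  have key : μ / Dy - μ / Dz = μ * (Dz - Dy) / (Dy * Dz) := by
    field_simp
  have hD : Dz - Dy = (μ ^ 2 - 1) * (Real.sin z ^ 2 - Real.sin y ^ 2) := by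
    have py := Real.sin_sq_add_cos_sq y
    have pz := Real.sin_sq_add_cos_sq z
    rw [hDy, hDz]; linear_combination pz - py
  have hsin : |Real.sin z ^ 2 - Real.sin y ^ 2| ≤ 2 * |y - z| := by
    have h3 : Real.sin z ^ 2 - Real.sin y ^ 2
        = (Real.sin z - Real.sin y) * (Real.sin z + Real.sin y) := by ring
    rw [h3, abs_mul]
    have h4 := st10_sin_lip z y
    have h5 : |Real.sin z + Real.sin y| ≤ 2 := by
      have := Real.abs_sin_le_one z
      have := Real.abs_sin_le_one y
      have := abs_add_le (Real.sin z) (Real.sin y)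
      linarith
    calc |Real.sin z - Real.sin y| * |Real.sin z + Real.sin y|
        ≤ |z - y| * 2 := by
          apply mul_le_mul h4 h5 (abs_nonneg _) (abs_nonneg _)
      _ = 2 * |y - z| := by rw [abs_sub_comm]; ring
  rw [key, abs_div, abs_mul]
  have hDyz : (1:ℝ) ≤ |Dy * Dz| := by
    rw [abs_of_pos (by nlinarith)]
    nlinarith
  have hnum : |μ| * |Dz - Dy| ≤ 2 * μ ^ 3 * |y - z| := by
    rw [abs_of_pos (by linarith : (0:ℝ) < μ), hD, abs_mul]
    have hμ2 : |μ ^ 2 - 1| = μ ^ 2 - 1 := abs_of_nonneg (by nlinarith)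
    rw [hμ2]
    calc μ * ((μ ^ 2 - 1) * |Real.sin z ^ 2 - Real.sin y ^ 2|)
        ≤ μ * ((μ ^ 2 - 1) * (2 * |y - z|)) := by
          apply mul_le_mul_of_nonneg_left _ (by linarith)
          apply mul_le_mul_of_nonneg_left hsin (by nlinarith)
      _ ≤ 2 * μ ^ 3 * |y - z| := by nlinarith [abs_nonneg (y - z)]
  calc |μ| * |Dz - Dy| / |Dy * Dz| ≤ |μ| * |Dz - Dy| :=
        div_le_self (mul_nonneg (abs_nonneg _) (abs_nonneg _)) hDyz
    _ ≤ 2 * μ ^ 3 * |y - z| := hnum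

noncomputable def st10Phi (μ y : ℝ) : ℝ :=
  ∫ t in (0:ℝ)..y, μ / (Real.cos t ^ 2 + μ ^ 2 * Real.sin t ^ 2)

lemma st10_f_ii {μ : ℝ} (hμ : 1 ≤ μ) (u v : ℝ) :
    IntervalIntegrable (fun y => μ / (Real.cos y ^ 2 + μ ^ 2 * Real.sin y ^ 2))
      volume u v :=
  (st10_f_cont hμ).intervalIntegrable u v

lemma st10Phi_sub {μ : ℝ} (hμ : 1 ≤ μ) (u v : ℝ) :
    st10Phi μ v - st10Phi μ u
      = ∫ t in u..v, μ / (Real.cos t ^ 2 + μ ^ 2 * Real.sin t ^ 2) :=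
  integral_interval_sub_left (st10_f_ii hμ 0 v) (st10_f_ii hμ 0 u)

lemma st10Phi_mono {μ : ℝ} (hμ : 1 ≤ μ) : Monotone (st10Phi μ) := by
  intro u v huv
  have h := st10Phi_sub hμ u v
  have h2 : 0 ≤ ∫ t in u..v, μ / (Real.cos t ^ 2 + μ ^ 2 * Real.sin t ^ 2) :=
    intervalIntegral.integral_nonneg huv (fun y _ => st10_f_nonneg hμ y)
  linarith

lemma st10Phi_zero (μ : ℝ) : st10Phi μ 0 = 0 := integral_same

lemma st10Phi_cont {μ : ℝ} (hμ : 1 ≤ μ) : Continuous (st10Phi μ) :=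
  intervalIntegral.continuous_primitive (fun u v => st10_f_ii hμ u v) 0

lemma st10Phi_pi_div_two {μ : ℝ} (hμ : 1 ≤ μ) : st10Phi μ (π/2) = π/2 := by
  have hμ0 : (0:ℝ) < μ := by linarith
  -- Phi agrees with arctan (μ tan y) on [0, π/2)
  have hagree : ∀ y ∈ Ico 0 (π/2), st10Phi μ y = Real.arctan (μ * Real.tan y) := by
    intro y hy
    have hderiv : ∀ x ∈ uIcc 0 y, HasDerivAt (fun w => Real.arctan (μ * Real.tan w))
        (μ / (Real.cos x ^ 2 + μ ^ 2 * Real.sin x ^ 2)) x := by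
      intro x hx
      have hx' : x ∈ Icc 0 y := by
        rwa [uIcc_of_le hy.1] at hx
      have hcos : Real.cos x ≠ 0 := by
        have : 0 < Real.cos x :=
          Real.cos_pos_of_mem_Ioo ⟨by linarith [hx'.1, Real.pi_pos], by
            have := hx'.2; have := hy.2; linarith⟩
        linarith
      have ht := (Real.hasDerivAt_tan hcos).const_mul μ
      have ha := Real.hasDerivAt_arctan (μ * Real.tan x)
      have := ha.comp x ht
      refine this.congr_deriv ?_
      have hden : Real.cos x ^ 2 + μ ^ 2 * Real.sin x ^ 2 ≠ 0 := by
        have := st10_den hμ x; linarith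
      rw [Real.tan_eq_sin_div_cos]
      field_simp
    have := intervalIntegral.integral_eq_sub_of_hasDerivAt hderiv
      ((st10_f_cont hμ).intervalIntegrable 0 y)
    rw [st10Phi, this]
    simp [Real.tan_zero, Real.arctan_zero]
  have hcont : Filter.Tendsto (st10Phi μ) (nhdsWithin (π/2) (Iio (π/2)))
      (nhds (st10Phi μ (π/2))) :=
    ((st10Phi_cont hμ).tendsto _).mono_left nhdsWithin_le_nhds
  have harctan : Filter.Tendsto (fun y => Real.arctan (μ * Real.tan y))
      (nhdsWithin (π/2) (Iio (π/2))) (nhds (π/2)) := by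
    have h1 : Filter.Tendsto (fun y => μ * Real.tan y)
        (nhdsWithin (π/2) (Iio (π/2))) Filter.atTop :=
      (Real.tendsto_tan_pi_div_two).const_mul_atTop hμ0
    exact (Real.tendsto_arctan_atTop.mono_right nhdsWithin_le_nhds).comp h1
  have heq : st10Phi μ =ᶠ[nhdsWithin (π/2) (Iio (π/2))]
      (fun y => Real.arctan (μ * Real.tan y)) := by
    have hmem : Ioo 0 (π/2) ∈ nhdsWithin (π/2) (Iio (π/2)) :=
      Ioo_mem_nhdsLT_of_mem (by constructor <;> [exact Real.pi_div_two_pos; exact le_refl _])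
    filter_upwards [hmem] with y hy
    exact hagree y ⟨hy.1.le, hy.2⟩
  have := hcont.congr' heq
  exact tendsto_nhds_unique this harctan

lemma st10_f_per (μ : ℝ) :
    Function.Periodic (fun y => μ / (Real.cos y ^ 2 + μ ^ 2 * Real.sin y ^ 2)) π := by
  intro y
  simp [Real.sin_add_pi, Real.cos_add_pi, neg_sq]

lemma st10Phi_pi {μ : ℝ} (hμ : 1 ≤ μ) : st10Phi μ π = π := by
  have h1 : st10Phi μ π - st10Phi μ (π/2)
      = ∫ t in (π/2)..π, μ / (Real.cos t ^ 2 + μ ^ 2 * Real.sin t ^ 2) :=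
    st10Phi_sub hμ (π/2) π
  have h2 : (∫ t in (π/2)..π, μ / (Real.cos t ^ 2 + μ ^ 2 * Real.sin t ^ 2))
      = ∫ t in (0:ℝ)..(π/2), μ / (Real.cos t ^ 2 + μ ^ 2 * Real.sin t ^ 2) := by
    have h3 := intervalIntegral.integral_comp_sub_left (a := (0:ℝ)) (b := π/2)
      (fun t => μ / (Real.cos t ^ 2 + μ ^ 2 * Real.sin t ^ 2)) π
    have h4 : (∫ t in (0:ℝ)..(π/2),
        μ / (Real.cos (π - t) ^ 2 + μ ^ 2 * Real.sin (π - t) ^ 2))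
        = ∫ t in (0:ℝ)..(π/2), μ / (Real.cos t ^ 2 + μ ^ 2 * Real.sin t ^ 2) := by
      apply intervalIntegral.integral_congr
      intro t _
      simp [Real.cos_pi_sub, Real.sin_pi_sub, neg_sq]
    rw [show π - π/2 = π/2 by ring, show π - (0:ℝ) = π by ring] at h3
    rw [← h4, h3]
  have h5 := st10Phi_pi_div_two hμ
  have h6 : (∫ t in (0:ℝ)..(π/2), μ / (Real.cos t ^ 2 + μ ^ 2 * Real.sin t ^ 2))
      = st10Phi μ (π/2) := rfl
  rw [h2, h6, h5] at h1
  linarith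

lemma st10Phi_add_pi {μ : ℝ} (hμ : 1 ≤ μ) (y : ℝ) :
    st10Phi μ (y + π) = st10Phi μ y + π := by
  have h1 : st10Phi μ (y + π) - st10Phi μ π
      = ∫ t in π..(y + π), μ / (Real.cos t ^ 2 + μ ^ 2 * Real.sin t ^ 2) :=
    st10Phi_sub hμ π (y + π)
  have h2 : (∫ t in π..(y + π), μ / (Real.cos t ^ 2 + μ ^ 2 * Real.sin t ^ 2))
      = st10Phi μ y := by
    have h3 := intervalIntegral.integral_comp_add_right (a := (0:ℝ)) (b := y)
      (fun t => μ / (Real.cos t ^ 2 + μ ^ 2 * Real.sin t ^ 2)) π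
    rw [zero_add] at h3
    rw [← h3]
    apply intervalIntegral.integral_congr
    intro t _
    simp [Real.sin_add_pi, Real.cos_add_pi, neg_sq]
  rw [h2] at h1
  rw [st10Phi_pi hμ] at h1
  linarith

lemma st10Phi_le {μ : ℝ} (hμ : 1 ≤ μ) (y : ℝ) : st10Phi μ y ≤ y + π := by
  have hper : Function.Periodic (fun w => st10Phi μ w - w) π := by
    intro w
    show st10Phi μ (w + π) - (w + π) = st10Phi μ w - w
    rw [st10Phi_add_pi hμ]; ring
  obtain ⟨z, hz, hgz⟩ := hper.exists_mem_Ico₀ Real.pi_pos y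
  have h1 : st10Phi μ z ≤ st10Phi μ π := st10Phi_mono hμ (by linarith [hz.2])
  have h2 : st10Phi μ π = π := st10Phi_pi hμ
  have h3 : 0 ≤ z := hz.1
  have hgz' : st10Phi μ y - y = st10Phi μ z - z := hgz
  linarith [hgz']

lemma st10_alg {μ : ℝ} (hμ : 1 ≤ μ) (ip rr ss qq x y : ℝ)
    (hD : 1 ≤ x ^ 2 + μ ^ 2 * y ^ 2) :
    (μ * min ip rr - |ss| - |qq| / μ) * (x ^ 2 + μ ^ 2 * y ^ 2)
      ≤ μ * (ip * x ^ 2 - ss * (2 * y * x) + (μ ^ 2 * rr - qq) * y ^ 2) := by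
  have hμ0 : (0:ℝ) < μ := by linarith
  have h1 : min ip rr ≤ ip := min_le_left _ _
  have h2 : min ip rr ≤ rr := min_le_right _ _
  have hA : μ * min ip rr * (x ^ 2 + μ ^ 2 * y ^ 2)
      ≤ μ * (ip * x ^ 2) + μ ^ 3 * (rr * y ^ 2) := by
    have e1 : 0 ≤ μ * ((ip - min ip rr) * x ^ 2) :=
      mul_nonneg hμ0.le (mul_nonneg (by linarith) (sq_nonneg x))
    have e2 : 0 ≤ μ ^ 3 * ((rr - min ip rr) * y ^ 2) :=
      mul_nonneg (by positivity) (mul_nonneg (by linarith) (sq_nonneg y))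
    nlinarith [e1, e2]
  have hB : -( |ss| * (x ^ 2 + μ ^ 2 * y ^ 2)) ≤ -(2 * μ * ss * y * x) := by
    have e1 : (0:ℝ) ≤ (|ss| - ss) * (x + μ * y) ^ 2 :=
      mul_nonneg (by linarith [le_abs_self ss]) (sq_nonneg _)
    have e2 : (0:ℝ) ≤ (|ss| + ss) * (x - μ * y) ^ 2 :=
      mul_nonneg (by linarith [neg_abs_le ss]) (sq_nonneg _)
    nlinarith [e1, e2]
  have hC : -(|qq| / μ * (x ^ 2 + μ ^ 2 * y ^ 2)) ≤ -(μ * qq * y ^ 2) := by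
    have e1 : (0:ℝ) ≤ |qq| / μ * x ^ 2 :=
      mul_nonneg (div_nonneg (abs_nonneg _) hμ0.le) (sq_nonneg _)
    have e2 : |qq| / μ * (μ ^ 2 * y ^ 2) = μ * |qq| * y ^ 2 := by
      field_simp
    have e3 : μ * qq * y ^ 2 ≤ μ * |qq| * y ^ 2 := by
      have : 0 ≤ μ * ((|qq| - qq) * y ^ 2) :=
        mul_nonneg hμ0.le (mul_nonneg (by linarith [le_abs_self qq]) (sq_nonneg y))
      nlinarith [this]
    nlinarith [e1, e2, e3]
  nlinarith [hA, hB, hC]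

lemma st10_key_ineq {μ : ℝ} (hμ : 1 ≤ μ) (ip rr ss qq th : ℝ) :
    μ * min ip rr - |ss| - |qq| / μ
      ≤ (μ / (Real.cos th ^ 2 + μ ^ 2 * Real.sin th ^ 2))
        * (ip * Real.cos th ^ 2 - ss * Real.sin (2 * th)
            + (μ ^ 2 * rr - qq) * Real.sin th ^ 2) := by
  have hD : (1:ℝ) ≤ Real.cos th ^ 2 + μ ^ 2 * Real.sin th ^ 2 := st10_den hμ th
  have hD0 : (0:ℝ) < Real.cos th ^ 2 + μ ^ 2 * Real.sin th ^ 2 := by linarith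
  have hsin2 : Real.sin (2 * th) = 2 * Real.sin th * Real.cos th := Real.sin_two_mul th
  rw [hsin2, div_mul_eq_mul_div, le_div_iff₀ hD0]
  have := st10_alg hμ ip rr ss qq (Real.cos th) (Real.sin th) hD
  nlinarith [this]

lemma st10_mem_uIoc {y c d : ℝ} (hy : y ∈ Set.uIoc c d) : |y - c| ≤ |d - c| := by
  rw [Set.mem_uIoc] at hy
  rcases hy with ⟨h1, h2⟩ | ⟨h1, h2⟩ <;>
    apply abs_le.mpr ⟨by linarith [neg_abs_le (d - c), le_abs_self (d - c)],
      by linarith [neg_abs_le (d - c), le_abs_self (d - c)]⟩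

lemma st10_F_bound (ip rr ss qq lam th : ℝ) :
    |ip * Real.cos th ^ 2 - ss * Real.sin (2 * th) + (lam * rr - qq) * Real.sin th ^ 2|
      ≤ |ip| + 2 * |ss| + (|lam| * |rr| + |qq|) := by
  have hc : |Real.cos th ^ 2| ≤ 1 := by
    rw [abs_of_nonneg (sq_nonneg _)]; exact Real.cos_sq_le_one th
  have hs : |Real.sin th ^ 2| ≤ 1 := by
    rw [abs_of_nonneg (sq_nonneg _)]; exact Real.sin_sq_le_one th
  have h2 : |Real.sin (2 * th)| ≤ 1 := Real.abs_sin_le_one _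
  have b1 : |ip * Real.cos th ^ 2| ≤ |ip| := by
    rw [abs_mul]; nlinarith [abs_nonneg ip, abs_nonneg (Real.cos th ^ 2)]
  have b2 : |ss * Real.sin (2 * th)| ≤ |ss| := by
    rw [abs_mul]; nlinarith [abs_nonneg ss, abs_nonneg (Real.sin (2 * th))]
  have b3 : |(lam * rr - qq) * Real.sin th ^ 2| ≤ |lam| * |rr| + |qq| := by
    rw [abs_mul]
    have : |lam * rr - qq| ≤ |lam| * |rr| + |qq| := by
      calc |lam * rr - qq| ≤ |lam * rr| + |qq| := abs_sub _ _
        _ = |lam| * |rr| + |qq| := by rw [abs_mul]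
    nlinarith [abs_nonneg (lam * rr - qq), abs_nonneg (Real.sin th ^ 2)]
  calc |ip * Real.cos th ^ 2 - ss * Real.sin (2 * th) + (lam * rr - qq) * Real.sin th ^ 2|
      ≤ |ip * Real.cos th ^ 2 - ss * Real.sin (2 * th)|
          + |(lam * rr - qq) * Real.sin th ^ 2| := abs_add_le _ _
    _ ≤ |ip * Real.cos th ^ 2| + |ss * Real.sin (2 * th)|
          + |(lam * rr - qq) * Real.sin th ^ 2| := by
          have := abs_sub (ip * Real.cos th ^ 2) (ss * Real.sin (2 * th))
          linarith
    _ ≤ |ip| + 2 * |ss| + (|lam| * |rr| + |qq|) := by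
          linarith [abs_nonneg ss, b1, b2, b3]

lemma st10_min_eq (x y : ℝ) : min x y = (x + y - |x - y|) / 2 := by
  rcases le_total x y with h | h
  · rw [min_eq_left h, abs_of_nonpos (by linarith)]; ring
  · rw [min_eq_right h, abs_of_nonneg (by linarith)]; ring

lemma st10_sqrt_tendsto : Filter.Tendsto Real.sqrt Filter.atTop Filter.atTop := by
  refine Filter.tendsto_atTop_atTop.2 fun K => ⟨(max K 0) ^ 2, fun x hx => ?_⟩
  have h1 : Real.sqrt ((max K 0) ^ 2) ≤ Real.sqrt x := Real.sqrt_le_sqrt hx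
  rw [Real.sqrt_sq (le_max_right K 0)] at h1
  exact le_trans (le_max_left K 0) h1

lemma st10_uIoc_subset {a b u v : ℝ} (hu : u ∈ Set.Icc a b) (hv : v ∈ Set.Icc a b) :
    Set.uIoc u v ⊆ Set.Icc a b := by
  intro t ht
  rw [Set.mem_uIoc] at ht
  rcases ht with ⟨h1, h2⟩ | ⟨h1, h2⟩ <;>
    exact ⟨by linarith [hu.1, hv.1], by linarith [hu.2, hv.2]⟩

lemma st10_ii {a b u v : ℝ} {F : ℝ → ℝ} (h : IntegrableOn F (Set.Icc a b))
    (hu : u ∈ Set.Icc a b) (hv : v ∈ Set.Icc a b) :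
    IntervalIntegrable F volume u v :=
  intervalIntegrable_iff.2 (h.mono_set (st10_uIoc_subset hu hv))

lemma st10_main_est {μ a b : ℝ} (hμ : 1 ≤ μ) (hab : a < b)
    (F L ψ : ℝ → ℝ)
    (hψc : ContinuousOn ψ (Set.Icc a b))
    (hFint : IntegrableOn F (Set.Icc a b))
    (hLint : IntegrableOn L (Set.Icc a b))
    (hGint : IntegrableOn
      (fun t => (μ / (Real.cos (ψ t) ^ 2 + μ ^ 2 * Real.sin (ψ t) ^ 2)) * F t)
      (Set.Icc a b))
    (hψeq : ∀ u ∈ Set.Icc a b, ∀ v ∈ Set.Icc a b, ψ v - ψ u = ∫ t in u..v, F t)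
    (hpt : ∀ t ∈ Set.Icc a b, L t
      ≤ (μ / (Real.cos (ψ t) ^ 2 + μ ^ 2 * Real.sin (ψ t) ^ 2)) * F t) :
    (∫ t in a..b, L t) ≤ st10Phi μ (ψ b) - st10Phi μ (ψ a) := by
  have hμ0 : (0:ℝ) < μ := by linarith
  have hable : a ≤ b := hab.le
  set f : ℝ → ℝ := fun y => μ / (Real.cos y ^ 2 + μ ^ 2 * Real.sin y ^ 2) with hfdef
  set Cf : ℝ := ∫ t in a..b, |F t| with hCfdef
  have hendA : a ∈ Set.Icc a b := ⟨le_refl a, hable⟩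
  have hendB : b ∈ Set.Icc a b := ⟨hable, le_refl b⟩
  have hCf0 : 0 ≤ Cf :=
    intervalIntegral.integral_nonneg hable (fun t _ => abs_nonneg _)
  apply le_of_forall_pos_le_add
  intro ε hε
  set δ : ℝ := ε / (2 * (Cf + 1)) with hδdef
  have hδ0 : 0 < δ := div_pos hε (by linarith)
  set εθ : ℝ := δ / (2 * μ ^ 3 + 1) with hεθdef
  have h2μ : (0:ℝ) < 2 * μ ^ 3 + 1 := by positivity
  have hεθ0 : 0 < εθ := div_pos hδ0 h2μ
  have hεθδ : 2 * μ ^ 3 * εθ ≤ δ := by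
    rw [hεθdef, mul_div_assoc']
    rw [div_le_iff₀ h2μ]
    nlinarith [hδ0.le, hμ0.le]
  -- uniform continuity of ψ
  have huc := isCompact_Icc.uniformContinuousOn_of_continuous hψc
  rw [Metric.uniformContinuousOn_iff] at huc
  obtain ⟨η, hη0, hηd⟩ := huc εθ hεθ0
  -- choose n
  have hba0 : 0 < b - a := by linarith
  obtain ⟨n, hn⟩ := exists_nat_gt ((b - a) / η)
  have hn0 : (0:ℝ) < n := lt_trans (div_pos hba0 hη0) hn
  have hstep : (b - a) / n < η := by
    rw [div_lt_iff₀ hn0]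
    have := (div_lt_iff₀ hη0).1 hn
    nlinarith
  have hstep0 : 0 ≤ (b - a) / n := by positivity
  set x : ℕ → ℝ := fun i => a + i * ((b - a) / n) with hxdef
  have hx0 : x 0 = a := by simp [hxdef]
  have hnne : (n:ℝ) ≠ 0 := ne_of_gt hn0
  have hxn : x n = b := by
    simp only [hxdef]
    field_simp
    ring
  have hxmono : ∀ i : ℕ, x i ≤ x (i + 1) := by
    intro i
    simp only [hxdef]
    have : (i:ℝ) ≤ (i:ℝ) + 1 := by linarith
    push_cast
    nlinarith [hstep0]
  have hxmem : ∀ i : ℕ, i ≤ n → x i ∈ Set.Icc a b := by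
    intro i hi
    constructor
    · simp only [hxdef]
      nlinarith [hstep0, Nat.cast_nonneg (α := ℝ) i]
    · have h1 : x i ≤ x n := by
        simp only [hxdef]
        have : (i:ℝ) ≤ (n:ℝ) := by exact_mod_cast hi
        nlinarith [hstep0]
      rw [hxn] at h1; exact h1
  have hxlen : ∀ i : ℕ, x (i + 1) - x i = (b - a) / n := by
    intro i; simp only [hxdef]; push_cast; ring
  -- per-piece estimate
  have piece : ∀ i : ℕ, i < n →
      (∫ t in x i..x (i + 1), L t)
        ≤ (st10Phi μ (ψ (x (i + 1))) - st10Phi μ (ψ (x i)))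
          + 2 * δ * ∫ t in x i..x (i + 1), |F t| := by
    intro i hi
    set u := x i with hu'
    set v := x (i + 1) with hv'
    have hu : u ∈ Set.Icc a b := hxmem i hi.le
    have hv : v ∈ Set.Icc a b := hxmem (i + 1) hi
    have huv : u ≤ v := hxmono i
    have hlen : v - u < η := by rw [hv', hu', hxlen]; exact hstep
    set c := ψ u with hc'
    set d := ψ v with hd'
    have hosc : ∀ t ∈ Set.Icc u v, |ψ t - c| ≤ εθ := by
      intro t ht
      have htab : t ∈ Set.Icc a b := ⟨le_trans hu.1 ht.1, le_trans ht.2 hv.2⟩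
      have hdist : dist t u < η := by
        rw [Real.dist_eq, abs_of_nonneg (by linarith [ht.1])]
        linarith [ht.2]
      have := hηd t htab u hu hdist
      rw [Real.dist_eq] at this
      exact this.le
    have hdc : d - c = ∫ t in u..v, F t := hψeq u hu v hv
    have hdcabs : |d - c| ≤ εθ := hosc v ⟨huv, le_refl v⟩
    have hfii := st10_f_ii hμ
    have h1 : st10Phi μ d - st10Phi μ c = ∫ y in c..d, f y := st10Phi_sub hμ c d
    have hflipbound : ∀ y z : ℝ, |y - z| ≤ εθ → |f y - f z| ≤ δ := by
      intro y z hyz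
      calc |f y - f z| ≤ 2 * μ ^ 3 * |y - z| := st10_f_lip hμ y z
        _ ≤ 2 * μ ^ 3 * εθ := by
            apply mul_le_mul_of_nonneg_left hyz (by positivity)
        _ ≤ δ := hεθδ
    have h2 : |(∫ y in c..d, f y) - f c * (d - c)| ≤ δ * |d - c| := by
      have e : (∫ y in c..d, f y) - f c * (d - c) = ∫ y in c..d, (f y - f c) := by
        rw [intervalIntegral.integral_sub (hfii c d) intervalIntegrable_const,
          intervalIntegral.integral_const, smul_eq_mul]
        ring
      rw [e]
      have := intervalIntegral.norm_integral_le_of_norm_le_const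
        (a := c) (b := d) (C := δ) (f := fun y => f y - f c)
        (fun y hy => by
          rw [Real.norm_eq_abs]
          exact hflipbound y c (le_trans (st10_mem_uIoc hy) hdcabs))
      simpa [Real.norm_eq_abs, abs_sub_comm] using this
    -- interval integrabilities
    have hFii : IntervalIntegrable F volume u v := st10_ii hFint hu hv
    have hFaii : IntervalIntegrable (fun t => |F t|) volume u v := hFii.abs
    have hGii : IntervalIntegrable (fun t => f (ψ t) * F t) volume u v :=
      st10_ii hGint hu hv
    have hLii : IntervalIntegrable L volume u v := st10_ii hLint hu hv
    have h3 : |f c * (d - c) - ∫ t in u..v, f (ψ t) * F t|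
        ≤ δ * ∫ t in u..v, |F t| := by
      have e : f c * (d - c) = ∫ t in u..v, f c * F t := by
        rw [intervalIntegral.integral_const_mul, ← hdc]
      rw [e, ← intervalIntegral.integral_sub (hFii.const_mul (f c)) hGii]
      have e2 : |∫ t in u..v, (f c * F t - f (ψ t) * F t)|
          ≤ ∫ t in u..v, |f c * F t - f (ψ t) * F t| :=
        intervalIntegral.abs_integral_le_integral_abs huv
      have e3 : (∫ t in u..v, |f c * F t - f (ψ t) * F t|)
          ≤ ∫ t in u..v, δ * |F t| := by
        apply intervalIntegral.integral_mono_on huv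
          ((hFii.const_mul (f c)).sub hGii).abs (hFaii.const_mul δ)
        intro t ht
        have : f c * F t - f (ψ t) * F t = (f c - f (ψ t)) * F t := by ring
        rw [this, abs_mul]
        apply mul_le_mul_of_nonneg_right _ (abs_nonneg _)
        rw [abs_sub_comm]
        exact hflipbound (ψ t) c (hosc t ht)
      have e4 : (∫ t in u..v, δ * |F t|) = δ * ∫ t in u..v, |F t| :=
        intervalIntegral.integral_const_mul δ _
      linarith [e2, e3]
    have h4 : (∫ t in u..v, L t) ≤ ∫ t in u..v, f (ψ t) * F t := by
      apply intervalIntegral.integral_mono_on huv hLii hGii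
      intro t ht
      exact hpt t ⟨le_trans hu.1 ht.1, le_trans ht.2 hv.2⟩
    have habsF : (0:ℝ) ≤ ∫ t in u..v, |F t| :=
      intervalIntegral.integral_nonneg huv (fun t _ => abs_nonneg _)
    have hdcF : |d - c| ≤ ∫ t in u..v, |F t| := by
      rw [hdc]
      exact intervalIntegral.abs_integral_le_integral_abs huv
    -- combine
    have c1 : (∫ y in c..d, f y) ≥ f c * (d - c) - δ * |d - c| := by
      have := abs_sub_le_iff.1 h2
      linarith [this.1, this.2]
    have c2 : f c * (d - c) ≥ (∫ t in u..v, f (ψ t) * F t) - δ * ∫ t in u..v, |F t| := by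
      have := abs_sub_le_iff.1 h3
      linarith [this.1, this.2]
    have c3 : δ * |d - c| ≤ δ * ∫ t in u..v, |F t| :=
      mul_le_mul_of_nonneg_left hdcF hδ0.le
    have := h1
    linarith [c1, c2, c3, h4]
  -- sum up
  have hLiiAll : ∀ k : ℕ, k < n → IntervalIntegrable L volume (x k) (x (k + 1)) :=
    fun k hk => st10_ii hLint (hxmem k hk.le) (hxmem (k + 1) hk)
  have hFaiiAll : ∀ k : ℕ, k < n →
      IntervalIntegrable (fun t => |F t|) volume (x k) (x (k + 1)) :=
    fun k hk => (st10_ii hFint (hxmem k hk.le) (hxmem (k + 1) hk)).abs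
  have hsumL := intervalIntegral.sum_integral_adjacent_intervals (μ := volume)
    (f := L) hLiiAll
  rw [hx0, hxn] at hsumL
  have hsumF := intervalIntegral.sum_integral_adjacent_intervals (μ := volume)
    (f := fun t => |F t|) hFaiiAll
  rw [hx0, hxn] at hsumF
  have htel : ∑ i ∈ Finset.range n,
      (st10Phi μ (ψ (x (i + 1))) - st10Phi μ (ψ (x i)))
        = st10Phi μ (ψ b) - st10Phi μ (ψ a) := by
    rw [Finset.sum_range_sub (fun i => st10Phi μ (ψ (x i)))]
    rw [hx0, hxn]
  have hsum_le : (∑ i ∈ Finset.range n, ∫ t in x i..x (i + 1), L t)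
      ≤ ∑ i ∈ Finset.range n,
        ((st10Phi μ (ψ (x (i + 1))) - st10Phi μ (ψ (x i)))
          + 2 * δ * ∫ t in x i..x (i + 1), |F t|) :=
    Finset.sum_le_sum (fun i hi => piece i (Finset.mem_range.1 hi))
  rw [Finset.sum_add_distrib, htel, ← Finset.mul_sum, hsumF, hsumL] at hsum_le
  have hfinal : 2 * δ * Cf ≤ ε := by
    have h2c : (0:ℝ) < 2 * (Cf + 1) := by linarith
    calc 2 * δ * Cf = ε * (2 * Cf) / (2 * (Cf + 1)) := by rw [hδdef]; ring
      _ ≤ ε := by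
          rw [div_le_iff₀ h2c]
          nlinarith [hε.le, hCf0]
  linarith [hsum_le, hfinal]

/-- The Prüfer angle tends to `+∞` at `b` as the spectral parameter tends to `+∞`:
if `θ(·,λ)` solves `θ′ = (1/p)cos²θ − s·sin 2θ + (λr − q)·sin²θ` (integral form)
with `θ(a,λ) = α ∈ [0,π)`, then `θ(b,λ) → ∞` as `λ → +∞`. -/
theorem stmt10 (a b : ℝ) (hab : a < b) (p q r s : ℝ → ℝ)
    (hp : IntegrableOn (fun x => 1 / p x) (Set.Ioo a b))
    (hq : IntegrableOn q (Set.Ioo a b))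
    (hr : IntegrableOn r (Set.Ioo a b))
    (hs : IntegrableOn s (Set.Ioo a b))
    (hppos : ∀ᵐ x ∂(volume.restrict (Set.Ioo a b)), 0 < p x)
    (hrpos : ∀ᵐ x ∂(volume.restrict (Set.Ioo a b)), 0 < r x)
    (α : ℝ) (hα : α ∈ Set.Ico 0 Real.pi)
    (θ : ℝ → ℝ → ℝ)
    (hθcont : ∀ lam : ℝ, ContinuousOn (θ lam) (Set.Icc a b))
    (hθinit : ∀ lam : ℝ, θ lam a = α)
    (hθsol : ∀ lam : ℝ, ∀ x ∈ Set.Icc a b,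
      θ lam x = α + ∫ t in a..x,
        (1 / p t * Real.cos (θ lam t) ^ 2 - s t * Real.sin (2 * θ lam t)
          + (lam * r t - q t) * Real.sin (θ lam t) ^ 2)) :
    Filter.Tendsto (fun lam => θ lam b) Filter.atTop Filter.atTop := by
  have hable : a ≤ b := hab.le
  have hres : volume.restrict (Set.Ioo a b) = volume.restrict (Set.Icc a b) :=
    Measure.restrict_congr_set Ioo_ae_eq_Icc
  have hp' : IntegrableOn (fun x => 1 / p x) (Set.Icc a b) := by
    rw [IntegrableOn, ← hres]; exact hp
  have hq' : IntegrableOn q (Set.Icc a b) := by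
    rw [IntegrableOn, ← hres]; exact hq
  have hr' : IntegrableOn r (Set.Icc a b) := by
    rw [IntegrableOn, ← hres]; exact hr
  have hs' : IntegrableOn s (Set.Icc a b) := by
    rw [IntegrableOn, ← hres]; exact hs
  have hmin' : IntegrableOn (fun t => min (1 / p t) (r t)) (Set.Icc a b) := by
    have he : (fun t => min (1 / p t) (r t))
        = fun t => (1 / p t + r t - |1 / p t - r t|) / 2 :=
      funext fun t => st10_min_eq _ _
    rw [he]
    exact ((hp'.add hr').sub (hp'.sub hr').abs).div_const 2
  have hminIoo : IntegrableOn (fun t => min (1 / p t) (r t)) (Set.Ioo a b) := by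
    rw [IntegrableOn, hres]; exact hmin'
  set M := ∫ t in Set.Ioo a b, min (1 / p t) (r t) with hMdef
  set S := ∫ t in Set.Ioo a b, |s t| with hSdef
  set Q := ∫ t in Set.Ioo a b, |q t| with hQdef
  have hS0 : 0 ≤ S := setIntegral_nonneg measurableSet_Ioo fun t _ => abs_nonneg _
  have hQ0 : 0 ≤ Q := setIntegral_nonneg measurableSet_Ioo fun t _ => abs_nonneg _
  have hpos : ∀ᵐ t ∂(volume.restrict (Set.Ioo a b)), 0 < min (1 / p t) (r t) := by
    filter_upwards [hppos, hrpos] with t h1 h2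
    exact lt_min (one_div_pos.2 h1) h2
  have hM0 : 0 < M := by
    have h0 : 0 ≤ᵐ[volume.restrict (Set.Ioo a b)] (fun t => min (1 / p t) (r t)) :=
      hpos.mono fun t ht => ht.le
    rw [hMdef]
    rw [integral_pos_iff_support_of_nonneg_ae h0 hminIoo]
    rw [pos_iff_ne_zero]
    intro hzero
    have h1 : volume.restrict (Set.Ioo a b) {t | ¬ (0 < min (1 / p t) (r t))} = 0 :=
      ae_iff.1 hpos
    have h2 : (volume.restrict (Set.Ioo a b)) Set.univ
        ≤ volume.restrict (Set.Ioo a b) ({t | ¬ (0 < min (1 / p t) (r t))}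
          ∪ Function.support fun t => min (1 / p t) (r t)) := by
      apply measure_mono
      intro t _
      by_cases h : 0 < min (1 / p t) (r t)
      · right; exact ne_of_gt h
      · left; exact h
    have h3 := measure_union_le (μ := volume.restrict (Set.Ioo a b))
      {t | ¬ (0 < min (1 / p t) (r t))} (Function.support fun t => min (1 / p t) (r t))
    rw [h1, hzero, add_zero] at h3
    have h4 := le_trans h2 h3
    rw [Measure.restrict_apply_univ, Real.volume_Ioo, nonpos_iff_eq_zero,
      ENNReal.ofReal_eq_zero] at h4
    linarith
  have key : ∀ lam : ℝ, 1 ≤ lam → Real.sqrt lam * M + (-S - Q - π) ≤ θ lam b := by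
    intro lam hlam
    have hlam0 : (0:ℝ) ≤ lam := by linarith
    set μ := Real.sqrt lam with hμdef
    have hμ1 : (1:ℝ) ≤ μ := by
      rw [hμdef, ← Real.sqrt_one]
      exact Real.sqrt_le_sqrt hlam
    have hμ0 : (0:ℝ) < μ := by linarith
    have hμsq : μ ^ 2 = lam := Real.sq_sqrt hlam0
    have hθm : AEMeasurable (θ lam) (volume.restrict (Set.Icc a b)) :=
      (hθcont lam).aemeasurable measurableSet_Icc
    have hcosm : AEMeasurable (fun t => Real.cos (θ lam t))
        (volume.restrict (Set.Icc a b)) := Real.measurable_cos.comp_aemeasurable hθm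
    have hsinm : AEMeasurable (fun t => Real.sin (θ lam t))
        (volume.restrict (Set.Icc a b)) := Real.measurable_sin.comp_aemeasurable hθm
    have hsin2m : AEMeasurable (fun t => Real.sin (2 * θ lam t))
        (volume.restrict (Set.Icc a b)) :=
      Real.measurable_sin.comp_aemeasurable (hθm.const_mul 2)
    have hFm : AEStronglyMeasurable (fun t => 1 / p t * Real.cos (θ lam t) ^ 2
        - s t * Real.sin (2 * θ lam t) + (lam * r t - q t) * Real.sin (θ lam t) ^ 2)
        (volume.restrict (Set.Icc a b)) := by
      apply AEMeasurable.aestronglyMeasurable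
      exact ((hp'.aemeasurable.mul (hcosm.pow_const 2)).sub
        (hs'.aemeasurable.mul hsin2m)).add
        (((hr'.aemeasurable.const_mul lam).sub hq'.aemeasurable).mul (hsinm.pow_const 2))
    have hgint : Integrable (fun t => |1 / p t| + 2 * |s t| + (|lam| * |r t| + |q t|))
        (volume.restrict (Set.Icc a b)) :=
      ((hp'.abs.add ((hs'.abs).const_mul 2)).add (((hr'.abs).const_mul |lam|).add hq'.abs))
    have hFint : IntegrableOn (fun t => 1 / p t * Real.cos (θ lam t) ^ 2
        - s t * Real.sin (2 * θ lam t) + (lam * r t - q t) * Real.sin (θ lam t) ^ 2)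
        (Set.Icc a b) := by
      apply Integrable.mono' hgint hFm
      apply ae_of_all
      intro t
      rw [Real.norm_eq_abs]
      exact st10_F_bound (1 / p t) (r t) (s t) (q t) lam (θ lam t)
    have hLint : IntegrableOn (fun t => μ * min (1 / p t) (r t) - |s t| - |q t| / μ)
        (Set.Icc a b) := ((hmin'.const_mul μ).sub hs'.abs).sub ((hq'.abs).div_const μ)
    have hGint : IntegrableOn
        (fun t => (μ / (Real.cos (θ lam t) ^ 2 + μ ^ 2 * Real.sin (θ lam t) ^ 2))
          * (1 / p t * Real.cos (θ lam t) ^ 2 - s t * Real.sin (2 * θ lam t)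
            + (lam * r t - q t) * Real.sin (θ lam t) ^ 2)) (Set.Icc a b) := by
      apply Integrable.bdd_mul (c := μ) hFint
      · exact ((st10_f_cont hμ1).measurable.comp_aemeasurable hθm).aestronglyMeasurable
      · refine ae_of_all _ (fun x => ?_)
        rw [Real.norm_eq_abs, abs_of_nonneg (st10_f_nonneg hμ1 _)]
        exact st10_f_le hμ1 _
    have ha' : a ∈ Set.Icc a b := ⟨le_refl a, hable⟩
    have hψeq : ∀ u ∈ Set.Icc a b, ∀ v ∈ Set.Icc a b,
        θ lam v - θ lam u = ∫ t in u..v,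
          (1 / p t * Real.cos (θ lam t) ^ 2 - s t * Real.sin (2 * θ lam t)
            + (lam * r t - q t) * Real.sin (θ lam t) ^ 2) := by
      intro u hu v hv
      rw [hθsol lam v hv, hθsol lam u hu]
      have := integral_interval_sub_left (st10_ii hFint ha' hv) (st10_ii hFint ha' hu)
      linarith [this]
    have hpt : ∀ t ∈ Set.Icc a b,
        (μ * min (1 / p t) (r t) - |s t| - |q t| / μ)
          ≤ (μ / (Real.cos (θ lam t) ^ 2 + μ ^ 2 * Real.sin (θ lam t) ^ 2))
            * (1 / p t * Real.cos (θ lam t) ^ 2 - s t * Real.sin (2 * θ lam t)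
              + (lam * r t - q t) * Real.sin (θ lam t) ^ 2) := by
      intro t _
      rw [← hμsq]
      exact st10_key_ineq hμ1 (1 / p t) (r t) (s t) (q t) (θ (μ ^ 2) t)
    have main := st10_main_est hμ1 hab
      (fun t => 1 / p t * Real.cos (θ lam t) ^ 2 - s t * Real.sin (2 * θ lam t)
        + (lam * r t - q t) * Real.sin (θ lam t) ^ 2)
      (fun t => μ * min (1 / p t) (r t) - |s t| - |q t| / μ)
      (θ lam) (hθcont lam) hFint hLint hGint hψeq hpt
    have hθa : θ lam a = α := hθinit lam
    have hPhiα : 0 ≤ st10Phi μ α := by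
      have := st10Phi_mono hμ1 hα.1
      rwa [st10Phi_zero] at this
    have hPhib : st10Phi μ (θ lam b) ≤ θ lam b + π := st10Phi_le hμ1 _
    have hLeval : (∫ t in a..b, (μ * min (1 / p t) (r t) - |s t| - |q t| / μ))
        = μ * M - S - Q / μ := by
      have hint1 : Integrable (fun t => μ * min (1 / p t) (r t))
          (volume.restrict (Set.Ioo a b)) := hminIoo.const_mul μ
      have hint2 : Integrable (fun t => |s t|) (volume.restrict (Set.Ioo a b)) := hs.abs
      have hint3 : Integrable (fun t => |q t| / μ) (volume.restrict (Set.Ioo a b)) :=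
        (hq.abs).div_const μ
      have hint12 : Integrable (fun t => μ * min (1 / p t) (r t) - |s t|)
          (volume.restrict (Set.Ioo a b)) := hint1.sub hint2
      rw [intervalIntegral.integral_of_le hable, integral_Ioc_eq_integral_Ioo]
      rw [MeasureTheory.integral_sub (f := fun t => μ * min (1 / p t) (r t) - |s t|)
        (g := fun t => |q t| / μ) hint12 hint3]
      rw [MeasureTheory.integral_sub (f := fun t => μ * min (1 / p t) (r t))
        (g := fun t => |s t|) hint1 hint2]
      rw [MeasureTheory.integral_const_mul, MeasureTheory.integral_div]
    have hQμ : Q / μ ≤ Q := div_le_self hQ0 hμ1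
    rw [hθa] at main
    rw [hLeval] at main
    linarith [main, hPhiα, hPhib, hQμ]
  have h1 : Filter.Tendsto (fun lam => Real.sqrt lam * M + (-S - Q - π))
      Filter.atTop Filter.atTop :=
    Filter.tendsto_atTop_add_const_right _ _ (st10_sqrt_tendsto.atTop_mul_const hM0)
  apply Filter.tendsto_atTop_mono' Filter.atTop _ h1
  filter_upwards [Filter.eventually_ge_atTop 1] with lam hlam
  exact key lam hlam
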